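/- arXiv:math/0605738 — 3 statements merged into one kernel-verified Lean document; each statement's English description precedes it below -/
import Mathlib

section
/- The full generating function of anti-lecture hall compositions satisfies the recurrence Aₙ(x₁,...,xₙ) = A_{n−1}(x₁,...,x_{n−1})/(1−xₙ) − A_{n−1}(x₁,...,x_{n−2}, xₙx_{n−1})·(1/(1−xₙ) − 1/(1 − x₁x₂²···xₙⁿ)), with A₁(x₁) = 1/(1−x₁). -/
noncomputable section
open Classical

/-- The full generating function `A_k(x₁,…,x_k)` of anti-lecture hall
compositions of length `k`: nonnegative integer sequences with
`λᵢ/i ≥ λ_{i+1}/(i+1)` for `1 ≤ i < k`. -/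
def AGF (k : ℕ) : MvPowerSeries (Fin k) ℤ :=
  fun d => if ∀ i : Fin k, ∀ h : (i : ℕ) + 1 < k,
      ((i : ℕ) + 1) * d ⟨(i : ℕ) + 1, h⟩ ≤ ((i : ℕ) + 2) * d i
    then 1 else 0

/-- `A_{n−1}(x₁,…,x_{n−1})` viewed in the `n`-variable ring (`n = m+2`). -/
def AGFemb (m : ℕ) : MvPowerSeries (Fin (m + 2)) ℤ :=
  fun d => if (∀ i : Fin (m + 2), ∀ h : (i : ℕ) + 1 < m + 1,
      ((i : ℕ) + 1) * d ⟨(i : ℕ) + 1, by omega⟩ ≤ ((i : ℕ) + 2) * d i) ∧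
      d (Fin.last (m + 1)) = 0
    then 1 else 0

/-- `A_{n−1}(x₁,…,x_{n−2},xₙx_{n−1})`: the substitution `x_{n−1} ← x_{n−1}xₙ`
applied to `A_{n−1}`; the coefficient at `d` is nonzero exactly when the last
exponent equals the next-to-last exponent and the first `n−1` exponents form
an anti-lecture hall composition. -/
def AGFsub (m : ℕ) : MvPowerSeries (Fin (m + 2)) ℤ :=
  fun d => if (∀ i : Fin (m + 2), ∀ h : (i : ℕ) + 1 < m + 1,
      ((i : ℕ) + 1) * d ⟨(i : ℕ) + 1, by omega⟩ ≤ ((i : ℕ) + 2) * d i) ∧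
      d (Fin.last (m + 1)) = d ⟨m, by omega⟩
    then 1 else 0

/-- The monomial `x₁x₂²x₃³⋯xₙⁿ`. -/
def zMon (m : ℕ) : MvPowerSeries (Fin (m + 2)) ℤ :=
  ∏ k : Fin (m + 2), MvPowerSeries.X k ^ ((k : ℕ) + 1)

namespace ALHCaux
open MvPowerSeries Finsupp

def eE (m : ℕ) : Fin (m+2) →₀ ℕ := Finsupp.equivFunOnFinite.symm fun i => (i:ℕ)+1

lemma eE_apply (m : ℕ) (i : Fin (m+2)) : eE m i = (i:ℕ)+1 := rfl

lemma zMon_eq (m : ℕ) : zMon m = MvPowerSeries.monomial (eE m) (1:ℤ) := by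
  have H : ∀ s : Finset (Fin (m+2)),
      (∏ k ∈ s, (MvPowerSeries.X k : MvPowerSeries (Fin (m+2)) ℤ) ^ ((k:ℕ)+1)) =
      MvPowerSeries.monomial (∑ k ∈ s, Finsupp.single k ((k:ℕ)+1)) (1:ℤ) := by
    intro s
    induction s using Finset.induction with
    | empty => simp
    | insert _ _ hns ih =>
        rw [Finset.prod_insert hns, Finset.sum_insert hns, ih, X_pow_eq,
          monomial_mul_monomial, one_mul]
  have h2 : (∑ k : Fin (m+2), Finsupp.single k ((k:ℕ)+1)) = eE m := by
    ext i
    simp [eE, Finsupp.single_apply, Finset.sum_add_distrib, Finset.sum_ite_eq', Finset.sum_ite_eq]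
  rw [zMon, H, h2]

lemma part1 : ((1 - MvPowerSeries.X (0 : Fin 1)) * AGF 1 = 1) := by
  have hA : ∀ d : Fin 1 →₀ ℕ, AGF 1 d = 1 := by
    intro d
    unfold AGF
    rw [if_pos]
    intro i h
    omega
  ext d
  rw [sub_mul, one_mul, map_sub, MvPowerSeries.X, coeff_monomial_mul, one_mul,
    MvPowerSeries.coeff_one]
  simp only [coeff_apply, hA]
  by_cases h : d = 0
  · subst h
    rw [if_pos rfl, if_neg]
    · ring
    · rw [Finsupp.single_le_iff]; simp
  · have h0 : 1 ≤ d 0 := by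
      by_contra hc
      apply h
      refine Finsupp.ext fun i => ?_
      have hi : i = 0 := Subsingleton.elim _ _
      subst hi
      simp; omega
    rw [if_pos (Finsupp.single_le_iff.mpr h0), if_neg h]
    ring


namespace ALHCaux2
open MvPowerSeries Finsupp
open ALHCaux

def Dv (m : ℕ) (d : Fin (m+2) →₀ ℕ) (j : ℕ) : ℕ := if h : j < m+2 then d ⟨j, h⟩ else 0

lemma Dv_eq {m : ℕ} (d : Fin (m+2) →₀ ℕ) {j : ℕ} (h : j < m+2) : Dv m d j = d ⟨j, h⟩ := dif_pos h

def dE (m : ℕ) : Fin (m+2) →₀ ℕ := Finsupp.single (Fin.last (m+1)) 1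

def Cp (m : ℕ) (d : Fin (m+2) →₀ ℕ) : Prop :=
  ∀ j : ℕ, j + 1 < m + 1 → (j+1) * Dv m d (j+1) ≤ (j+2) * Dv m d j

lemma step (p q x y : ℕ) (hx : q ≤ x) (hy : p ≤ y) :
    p * (x - q) ≤ q * (y - p) ↔ p * x ≤ q * y := by
  obtain ⟨x', rfl⟩ := Nat.exists_eq_add_of_le hx
  obtain ⟨y', rfl⟩ := Nat.exists_eq_add_of_le hy
  rw [Nat.add_sub_cancel_left, Nat.add_sub_cancel_left, mul_add, mul_add,
    mul_comm q p]
  exact ⟨fun h => Nat.add_le_add_left h _, fun h => Nat.le_of_add_le_add_left h⟩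

lemma P_iff (m : ℕ) (d : Fin (m+2) →₀ ℕ) :
    (∀ i : Fin (m+2), ∀ h : (i : ℕ) + 1 < m + 2,
        ((i : ℕ) + 1) * d ⟨(i : ℕ) + 1, h⟩ ≤ ((i : ℕ) + 2) * d i) ↔
      (Cp m d ∧ (m+1) * Dv m d (m+1) ≤ (m+2) * Dv m d m) := by
  constructor
  · intro h
    constructor
    · intro j hj
      rw [Dv_eq d (by omega : j+1 < m+2), Dv_eq d (by omega : j < m+2)]
      exact h ⟨j, by omega⟩ (show j+1 < m+2 by omega)
    · rw [Dv_eq d (by omega : m+1 < m+2), Dv_eq d (by omega : m < m+2)]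
      exact h ⟨m, by omega⟩ (show m+1 < m+2 by omega)
  · rintro ⟨hc, hl⟩ i hi
    obtain ⟨iv, hv⟩ := i
    simp only at hi ⊢
    by_cases h2 : iv + 1 < m + 1
    · have := hc iv h2
      rwa [Dv_eq d (by omega : iv+1 < m+2), Dv_eq d (by omega : iv < m+2)] at this
    · have hm : m = iv := by omega
      subst hm
      rwa [Dv_eq d (by omega : m+1 < m+2), Dv_eq d (by omega : m < m+2)] at hl

lemma C_iff (m : ℕ) (d : Fin (m+2) →₀ ℕ) :
    (∀ i : Fin (m+2), ∀ h : (i : ℕ) + 1 < m + 1,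
        ((i : ℕ) + 1) * d ⟨(i : ℕ) + 1, by omega⟩ ≤ ((i : ℕ) + 2) * d i) ↔ Cp m d := by
  constructor
  · intro h j hj
    rw [Dv_eq d (by omega : j+1 < m+2), Dv_eq d (by omega : j < m+2)]
    exact h ⟨j, by omega⟩ hj
  · intro h i hi
    obtain ⟨iv, hv⟩ := i
    simp only at hi ⊢
    have := h iv hi
    rwa [Dv_eq d (by omega : iv+1 < m+2), Dv_eq d (by omega : iv < m+2)] at this

lemma AGF_coeff (m : ℕ) (d : Fin (m+2) →₀ ℕ) :
    AGF (m+2) d = if Cp m d ∧ (m+1) * Dv m d (m+1) ≤ (m+2) * Dv m d m then 1 else 0 := by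
  unfold AGF
  split_ifs with h1 h2 h2
  · rfl
  · exact absurd ((P_iff m d).mp h1) h2
  · exact absurd ((P_iff m d).mpr h2) h1
  · rfl

lemma AGFemb_coeff (m : ℕ) (d : Fin (m+2) →₀ ℕ) :
    AGFemb m d = if Cp m d ∧ Dv m d (m+1) = 0 then 1 else 0 := by
  unfold AGFemb
  rw [Dv_eq d (by omega : m+1 < m+2)]
  split_ifs with h1 h2 h2
  · rfl
  · exact absurd ⟨(C_iff m d).mp h1.1, h1.2⟩ h2
  · exact absurd ⟨(C_iff m d).mpr h2.1, h2.2⟩ h1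
  · rfl

lemma AGFsub_coeff (m : ℕ) (d : Fin (m+2) →₀ ℕ) :
    AGFsub m d = if Cp m d ∧ Dv m d (m+1) = Dv m d m then 1 else 0 := by
  unfold AGFsub
  rw [Dv_eq d (by omega : m+1 < m+2), Dv_eq d (by omega : m < m+2)]
  split_ifs with h1 h2 h2
  · rfl
  · exact absurd ⟨(C_iff m d).mp h1.1, h1.2⟩ h2
  · exact absurd ⟨(C_iff m d).mpr h2.1, h2.2⟩ h1
  · rfl

lemma Dv_sub_eE (m : ℕ) (d : Fin (m+2) →₀ ℕ) (j : ℕ) (h : j < m+2) :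
    Dv m (d - eE m) j = Dv m d j - (j+1) := by
  rw [Dv_eq _ h, Dv_eq d h, Finsupp.tsub_apply, eE_apply]

lemma Dv_sub_dE_lt (m : ℕ) (d : Fin (m+2) →₀ ℕ) (j : ℕ) (h : j < m+1) :
    Dv m (d - dE m) j = Dv m d j := by
  rw [Dv_eq _ (by omega : j < m+2), Dv_eq d (by omega : j < m+2), Finsupp.tsub_apply, dE,
    Finsupp.single_eq_of_ne, Nat.sub_zero]
  intro he
  have := congrArg Fin.val he
  simp [Fin.last] at this
  omega

lemma Dv_sub_dE_last (m : ℕ) (d : Fin (m+2) →₀ ℕ) :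
    Dv m (d - dE m) (m+1) = Dv m d (m+1) - 1 := by
  rw [Dv_eq _ (by omega : m+1 < m+2), Dv_eq d (by omega : m+1 < m+2), Finsupp.tsub_apply, dE]
  have : (⟨m+1, by omega⟩ : Fin (m+2)) = Fin.last (m+1) := rfl
  rw [this, Finsupp.single_eq_same]

lemma Cp_sub_dE (m : ℕ) (d : Fin (m+2) →₀ ℕ) : Cp m (d - dE m) ↔ Cp m d := by
  unfold Cp
  refine forall_congr' fun j => imp_congr_right fun hj => ?_
  rw [Dv_sub_dE_lt m d (j+1) (by omega), Dv_sub_dE_lt m d j (by omega)]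

lemma eE_le_iff (m : ℕ) (d : Fin (m+2) →₀ ℕ) :
    eE m ≤ d ↔ ∀ j : ℕ, (h : j < m+2) → j + 1 ≤ Dv m d j := by
  rw [Finsupp.le_def]
  constructor
  · intro h j hj
    rw [Dv_eq d hj]
    exact h ⟨j, hj⟩
  · intro h i
    have := h i i.isLt
    rw [Dv_eq d i.isLt] at this
    exact this

lemma Cp_sub_eE (m : ℕ) (d : Fin (m+2) →₀ ℕ) (h : eE m ≤ d) :
    Cp m (d - eE m) ↔ Cp m d := by
  unfold Cp
  refine forall_congr' fun j => imp_congr_right fun hj => ?_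
  rw [Dv_sub_eE m d (j+1) (by omega), Dv_sub_eE m d j (by omega)]
  exact step (j+1) (j+2) _ _ ((eE_le_iff m d).mp h (j+1) (by omega))
    ((eE_le_iff m d).mp h j (by omega))

lemma grow (m : ℕ) (d : Fin (m+2) →₀ ℕ) (hC : Cp m d) (hb : m + 1 ≤ Dv m d m) :
    ∀ k j, m - j = k → j ≤ m → j + 1 ≤ Dv m d j := by
  intro k
  induction k with
  | zero =>
      intro j h1 h2
      have : j = m := by omega
      subst this; exact hb
  | succ k ih =>
      intro j h1 h2
      have h3 := ih (j+1) (by omega) (by omega)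
      have h4 := hC j (by omega)
      by_contra hlt
      push_neg at hlt
      nlinarith [h3, h4, hlt]

lemma eE_le_of (m : ℕ) (d : Fin (m+2) →₀ ℕ) (hC : Cp m d) (hb : m + 1 ≤ Dv m d m)
    (ha : m + 2 ≤ Dv m d (m+1)) : eE m ≤ d := by
  rw [eE_le_iff]
  intro j hj
  by_cases h : j ≤ m
  · exact grow m d hC hb (m - j) j rfl h
  · have : j = m+1 := by omega
    subst this; omega

end ALHCaux2
namespace ALHCaux2
open MvPowerSeries Finsupp ALHCaux

lemma dE_le_iff (m : ℕ) (d : Fin (m+2) →₀ ℕ) : dE m ≤ d ↔ 1 ≤ Dv m d (m+1) := by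
  rw [dE, Finsupp.single_le_iff, Dv_eq d (by omega : m+1 < m+2)]
  exact Iff.rfl

lemma AGF_coeff_sub_dE (m : ℕ) (d : Fin (m+2) →₀ ℕ) :
    AGF (m+2) (d - dE m) =
      if Cp m d ∧ (m+1) * (Dv m d (m+1) - 1) ≤ (m+2) * Dv m d m then 1 else 0 := by
  rw [AGF_coeff]
  refine if_congr (and_congr (Cp_sub_dE m d) ?_) rfl rfl
  rw [Dv_sub_dE_last, Dv_sub_dE_lt m d m (by omega)]

lemma AGF_coeff_sub_eE (m : ℕ) (d : Fin (m+2) →₀ ℕ) (hE : eE m ≤ d) :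
    AGF (m+2) (d - eE m) =
      if Cp m d ∧ (m+1) * Dv m d (m+1) ≤ (m+2) * Dv m d m then 1 else 0 := by
  rw [AGF_coeff]
  refine if_congr (and_congr (Cp_sub_eE m d hE) ?_) rfl rfl
  rw [Dv_sub_eE m d (m+1) (by omega), Dv_sub_eE m d m (by omega)]
  exact step (m+1) (m+2) _ _ ((eE_le_iff m d).mp hE (m+1) (by omega))
    ((eE_le_iff m d).mp hE m (by omega))

lemma AGF_coeff_sub_both (m : ℕ) (d : Fin (m+2) →₀ ℕ) (hE : eE m ≤ d)
    (h3 : m + 3 ≤ Dv m d (m+1)) :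
    AGF (m+2) (d - eE m - dE m) =
      if Cp m d ∧ (m+1) * (Dv m d (m+1) - 1) ≤ (m+2) * Dv m d m then 1 else 0 := by
  rw [AGF_coeff]
  refine if_congr (and_congr ?_ ?_) rfl rfl
  · rw [Cp_sub_dE, Cp_sub_eE m d hE]
  · rw [Dv_sub_dE_last, Dv_sub_dE_lt _ _ m (by omega),
      Dv_sub_eE m d (m+1) (by omega), Dv_sub_eE m d m (by omega)]
    have hb := (eE_le_iff m d).mp hE m (by omega)
    have hkey : Dv m d (m+1) - (m+1+1) - 1 = (Dv m d (m+1) - 1) - (m+2) := by omega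
    rw [hkey]
    exact step (m+1) (m+2) _ _ (by omega) hb

lemma AGFemb_coeff_sub_eE (m : ℕ) (d : Fin (m+2) →₀ ℕ) (hE : eE m ≤ d) :
    AGFemb m (d - eE m) =
      if Cp m d ∧ Dv m d (m+1) = m + 2 then 1 else 0 := by
  rw [AGFemb_coeff]
  refine if_congr (and_congr (Cp_sub_eE m d hE) ?_) rfl rfl
  rw [Dv_sub_eE m d (m+1) (by omega)]
  have ha := (eE_le_iff m d).mp hE (m+1) (by omega)
  omega

lemma AGFsub_coeff_sub_dE (m : ℕ) (d : Fin (m+2) →₀ ℕ) :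
    AGFsub m (d - dE m) =
      if Cp m d ∧ Dv m d (m+1) - 1 = Dv m d m then 1 else 0 := by
  rw [AGFsub_coeff]
  refine if_congr (and_congr (Cp_sub_dE m d) ?_) rfl rfl
  rw [Dv_sub_dE_last, Dv_sub_dE_lt m d m (by omega)]

lemma AGFsub_coeff_sub_eE (m : ℕ) (d : Fin (m+2) →₀ ℕ) (hE : eE m ≤ d) :
    AGFsub m (d - eE m) =
      if Cp m d ∧ Dv m d (m+1) = Dv m d m + 1 then 1 else 0 := by
  rw [AGFsub_coeff]
  refine if_congr (and_congr (Cp_sub_eE m d hE) ?_) rfl rfl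
  rw [Dv_sub_eE m d (m+1) (by omega), Dv_sub_eE m d m (by omega)]
  have ha := (eE_le_iff m d).mp hE (m+1) (by omega)
  have hb := (eE_le_iff m d).mp hE m (by omega)
  omega

lemma part2 (m : ℕ) :
    AGF (m + 2) * (1 - MvPowerSeries.X (Fin.last (m + 1))) * (1 - zMon m) =
      AGFemb m * (1 - zMon m) -
        AGFsub m * (MvPowerSeries.X (Fin.last (m + 1)) - zMon m) := by
  have hX : (MvPowerSeries.X (Fin.last (m+1)) : MvPowerSeries (Fin (m+2)) ℤ)
      = MvPowerSeries.monomial (dE m) (1:ℤ) := rfl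
  rw [zMon_eq, hX]
  ext d
  simp only [mul_sub, sub_mul, mul_one, one_mul, ← mul_assoc, monomial_mul_monomial]
  simp only [map_sub, MvPowerSeries.coeff_mul_monomial, mul_one, one_mul]
  simp only [coeff_apply]
  by_cases hE : eE m ≤ d
  · have ha := (eE_le_iff m d).mp hE (m+1) (by omega)
    have hb := (eE_le_iff m d).mp hE m (by omega)
    have h3iff : (dE m ≤ d - eE m) ↔ m + 3 ≤ Dv m d (m+1) := by
      rw [dE_le_iff, Dv_sub_eE m d (m+1) (by omega)]
      omega
    rw [if_pos hE, if_pos hE, if_pos hE, if_pos hE]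
    by_cases h3 : m + 3 ≤ Dv m d (m+1)
    · rw [if_pos (h3iff.mpr h3), AGF_coeff_sub_both m d hE h3,
        AGF_coeff m d, AGF_coeff_sub_dE m d, AGF_coeff_sub_eE m d hE,
        AGFemb_coeff m d, AGFemb_coeff_sub_eE m d hE,
        AGFsub_coeff_sub_dE m d, AGFsub_coeff_sub_eE m d hE]
      simp only [dE_le_iff m d]
      by_cases hc : Cp m d
      · simp only [hc, true_and]
        set a := Dv m d (m+1) with hadef
        set b := Dv m d m with hbdef
        rw [if_pos (show 1 ≤ a by omega), if_pos (show 1 ≤ a by omega),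
          if_neg (show ¬ a = 0 by omega), if_neg (show ¬ a = m+2 by omega),
          if_congr (show (a - 1 = b) ↔ (a = b + 1) by omega) rfl rfl]
        ring
      · simp [hc]
    · rw [if_neg (fun h => h3 (h3iff.mp h)),
        AGF_coeff m d, AGF_coeff_sub_dE m d, AGF_coeff_sub_eE m d hE,
        AGFemb_coeff m d, AGFemb_coeff_sub_eE m d hE,
        AGFsub_coeff_sub_dE m d, AGFsub_coeff_sub_eE m d hE]
      simp only [dE_le_iff m d]
      by_cases hc : Cp m d
      · simp only [hc, true_and]
        set a := Dv m d (m+1) with hadef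
        set b := Dv m d m with hbdef
        have ha2 : a = m + 2 := by omega
        rw [ha2, show m+2-1 = m+1 from rfl]
        rw [if_pos (show 1 ≤ m+2 by omega), if_pos (show 1 ≤ m+2 by omega),
          if_pos (show (m+1)*(m+2) ≤ (m+2)*b by nlinarith),
          if_pos (show (m+1)*(m+1) ≤ (m+2)*b by nlinarith),
          if_neg (show ¬ (m+2 : ℕ) = 0 by omega), if_pos rfl,
          if_congr (show (m+1 = b) ↔ (m+2 = b+1) by omega) rfl rfl]
        ring
      · simp [hc]
  · rw [if_neg hE, if_neg hE, if_neg hE, if_neg hE,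
      AGF_coeff m d, AGF_coeff_sub_dE m d, AGFemb_coeff m d,
      AGFsub_coeff_sub_dE m d]
    simp only [dE_le_iff m d]
    by_cases hc : Cp m d
    · simp only [hc, true_and]
      have hside : ¬(m+1 ≤ Dv m d m ∧ m+2 ≤ Dv m d (m+1)) :=
        fun h => hE (eE_le_of m d hc h.1 h.2)
      set a := Dv m d (m+1) with hadef
      set b := Dv m d m with hbdef
      by_cases ha0 : 1 ≤ a
      · rw [if_pos ha0, if_pos ha0, if_neg (show ¬ a = 0 by omega)]
        by_cases hT1 : (m+1) * a ≤ (m+2) * b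
        · have hT2 : (m+1) * (a-1) ≤ (m+2) * b :=
            le_trans (Nat.mul_le_mul_left (m+1) (by omega)) hT1
          have hne : ¬ (a - 1 = b) := by
            intro h
            have h1 : a = b + 1 := by omega
            have e1 : (m+1) * (b+1) = (m+1) * b + (m+1) := by ring
            have e2 : (m+2) * b = (m+1) * b + b := by ring
            rw [h1, e1, e2] at hT1
            exact hside ⟨Nat.le_of_add_le_add_left hT1, by omega⟩
          rw [if_pos hT1, if_pos hT2, if_neg hne]
          ring
        · have hiff : ((m+1) * (a-1) ≤ (m+2) * b) ↔ (a - 1 = b) := by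
            constructor
            · intro h
              have hab : b + 1 ≤ a := by
                by_contra hx
                push_neg at hx
                exact hT1 (le_trans (Nat.mul_le_mul_left (m+1) (by omega))
                  (Nat.mul_le_mul_right b (by omega)))
              by_contra hne
              have hge : b + 2 ≤ a := by omega
              have h5 : (m+1) * (b+1) ≤ (m+1) * (a-1) :=
                Nat.mul_le_mul_left (m+1) (by omega)
              have e1 : (m+1) * (b+1) = (m+1) * b + (m+1) := by ring
              have e2 : (m+2) * b = (m+1) * b + b := by ring
              have h6 := le_trans h5 h
              rw [e1, e2] at h6
              exact hside ⟨Nat.le_of_add_le_add_left h6, by omega⟩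
            · intro h
              calc (m+1) * (a-1) = (m+1) * b := by rw [h]
              _ ≤ (m+2) * b := Nat.mul_le_mul_right b (by omega)
          rw [if_neg hT1, if_congr hiff rfl rfl]
          ring
      · have ha00 : a = 0 := by omega
        rw [if_neg ha0, if_neg ha0, if_pos ha00,
          if_pos (show (m+1) * a ≤ (m+2) * b by rw [ha00]; simp)]
    · simp [hc]

end ALHCaux2

end ALHCaux

/-- The recurrence
`Aₙ = A_{n−1}/(1−xₙ) − A_{n−1}(x₁,…,x_{n−2},xₙx_{n−1})·(1/(1−xₙ) − 1/(1−x₁x₂²⋯xₙⁿ))`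
for `n = m+2`, with the denominators `(1−xₙ)(1−x₁x₂²⋯xₙⁿ)` cleared, together
with the initial condition `A₁(x₁) = 1/(1−x₁)`. -/
theorem alhc_full_recurrence :
    ((1 - MvPowerSeries.X (0 : Fin 1)) * AGF 1 = 1) ∧
    ∀ m : ℕ,
      AGF (m + 2) * (1 - MvPowerSeries.X (Fin.last (m + 1))) * (1 - zMon m) =
        AGFemb m * (1 - zMon m) -
          AGFsub m * (MvPowerSeries.X (Fin.last (m + 1)) - zMon m) := by
  exact ⟨ALHCaux.part1, fun m => ALHCaux.ALHCaux2.part2 m⟩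
end
end

section
/- For every nonnegative integer n, Σ_{j=0}^{n} (−1)^j (−1;q)_j [n choose j]_q = (−1)^n, where (−1;q)_j = (1+1)(1+q)···(1+q^{j−1}) and [n choose j]_q is the Gaussian binomial coefficient. -/
noncomputable section

/-- The q-Pochhammer symbol `(a;q)_j = ∏_{t=0}^{j−1}(1 − a q^t)` in the field
of rational functions `ℚ(q)`. -/
def qPoch (a : RatFunc ℚ) (j : ℕ) : RatFunc ℚ :=
  ∏ t ∈ Finset.range j, (1 - a * RatFunc.X ^ t)

/-- The Gaussian binomial coefficient
`[n choose j]_q = (q;q)ₙ / ((q;q)_j (q;q)_{n−j})`. -/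
def gaussBinom (n j : ℕ) : RatFunc ℚ :=
  qPoch RatFunc.X n / (qPoch RatFunc.X j * qPoch RatFunc.X (n - j))

lemma qPoch_succ (a : RatFunc ℚ) (j : ℕ) :
    qPoch a (j + 1) = qPoch a j * (1 - a * RatFunc.X ^ j) := by
  simp [qPoch, Finset.prod_range_succ]

lemma qPochX_ne_zero (m : ℕ) : qPoch RatFunc.X m ≠ 0 := by
  unfold qPoch
  rw [Finset.prod_ne_zero_iff]
  intro t _
  have : (1 - RatFunc.X * RatFunc.X ^ t : RatFunc ℚ)
      = algebraMap (Polynomial ℚ) (RatFunc ℚ) (1 - Polynomial.X * Polynomial.X ^ t) := by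
    simp [map_sub, map_mul, map_pow, RatFunc.algebraMap_X]
  rw [this]
  apply RatFunc.algebraMap_ne_zero
  intro h
  have := congrArg (Polynomial.eval 0) h
  simp at this

lemma qPoch_zero (a : RatFunc ℚ) : qPoch a 0 = 1 := by simp [qPoch]

lemma gaussBinom_zero (n : ℕ) : gaussBinom n 0 = 1 := by
  rw [gaussBinom, qPoch_zero, one_mul, Nat.sub_zero, div_self (qPochX_ne_zero n)]

lemma gaussBinom_self (n : ℕ) : gaussBinom n n = 1 := by
  rw [gaussBinom, Nat.sub_self, qPoch_zero, mul_one, div_self (qPochX_ne_zero n)]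

lemma pascal (n i : ℕ) (h : i + 1 ≤ n) :
    gaussBinom (n + 1) (i + 1)
      = RatFunc.X ^ (i + 1) * gaussBinom n (i + 1) + gaussBinom n i := by
  set k := n - (i + 1) with hk
  have hn : n = i + 1 + k := by omega
  have h1 : n + 1 - (i + 1) = k + 1 := by omega
  have h2 : n - i = k + 1 := by omega
  unfold gaussBinom
  rw [h1, h2, hn]
  rw [Nat.add_sub_cancel_left]
  rw [qPoch_succ RatFunc.X (i + 1 + k), qPoch_succ RatFunc.X k, qPoch_succ RatFunc.X i]
  have hPi := qPochX_ne_zero i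
  have hPk := qPochX_ne_zero k
  have hPn := qPochX_ne_zero (i + 1 + k)
  have hfi : (1 - RatFunc.X * RatFunc.X ^ i : RatFunc ℚ) ≠ 0 := by
    have := qPochX_ne_zero (i + 1)
    rw [qPoch_succ] at this
    exact right_ne_zero_of_mul this
  have hfk : (1 - RatFunc.X * RatFunc.X ^ k : RatFunc ℚ) ≠ 0 := by
    have := qPochX_ne_zero (k + 1)
    rw [qPoch_succ] at this
    exact right_ne_zero_of_mul this
  field_simp
  ring

/-- `Σ_{j=0}^{n} (−1)^j (−1;q)_j [n choose j]_q = (−1)^n`. -/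
theorem alternating_qbinom_sum (n : ℕ) :
    ∑ j ∈ Finset.range (n + 1),
      (-1 : RatFunc ℚ) ^ j * qPoch (-1) j * gaussBinom n j = (-1) ^ n := by
  induction n with
  | zero => simp [gaussBinom_zero, qPoch]
  | succ n ih =>
    set f : ℕ → RatFunc ℚ := fun j => (-1 : RatFunc ℚ) ^ j * qPoch (-1) j with hf
    have hfstep : ∀ j, f (j + 1) = -(1 + RatFunc.X ^ j) * f j := by
      intro j
      simp only [hf, qPoch_succ, pow_succ]
      ring
    have key : ∑ j ∈ Finset.range (n + 2), f j * gaussBinom (n + 1) j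
        = ∑ j ∈ Finset.range (n + 1), (f j * RatFunc.X ^ j + f (j + 1)) * gaussBinom n j := by
      rw [Finset.sum_range_succ]
      rw [Finset.sum_range_succ' (fun j => f j * gaussBinom (n + 1) j) n]
      have hpas : ∀ i ∈ Finset.range n, f (i + 1) * gaussBinom (n + 1) (i + 1)
          = f (i + 1) * RatFunc.X ^ (i + 1) * gaussBinom n (i + 1)
            + f (i + 1) * gaussBinom n i := by
        intro i hi
        rw [pascal n i (by simpa using Finset.mem_range.mp hi)]
        ring
      rw [Finset.sum_congr rfl hpas, Finset.sum_add_distrib]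
      have hrhs : ∑ j ∈ Finset.range (n + 1),
          (f j * RatFunc.X ^ j + f (j + 1)) * gaussBinom n j
          = (∑ j ∈ Finset.range (n + 1), f j * RatFunc.X ^ j * gaussBinom n j)
            + ∑ j ∈ Finset.range (n + 1), f (j + 1) * gaussBinom n j := by
        rw [← Finset.sum_add_distrib]
        apply Finset.sum_congr rfl
        intro j _
        ring
      rw [hrhs]
      rw [Finset.sum_range_succ' (fun j => f j * RatFunc.X ^ j * gaussBinom n j) n]
      rw [Finset.sum_range_succ (fun j => f (j + 1) * gaussBinom n j) n]
      rw [gaussBinom_zero, gaussBinom_zero, gaussBinom_self, gaussBinom_self]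
      ring
    calc ∑ j ∈ Finset.range (n + 1 + 1), f j * gaussBinom (n + 1) j
        = ∑ j ∈ Finset.range (n + 1), (f j * RatFunc.X ^ j + f (j + 1)) * gaussBinom n j := key
      _ = ∑ j ∈ Finset.range (n + 1), -(f j * gaussBinom n j) := by
          apply Finset.sum_congr rfl
          intro j _
          rw [hfstep j]
          ring
      _ = -∑ j ∈ Finset.range (n + 1), f j * gaussBinom n j := by rw [Finset.sum_neg_distrib]
      _ = (-1) ^ (n + 1) := by rw [ih]; ring
end
end

section
/- For any finite system of homogeneous linear inequalities with integer coefficients in n variables, the full generating function of its set of nonnegative integer solutions is a rational function of the form p(x₁,...,xₙ)/((1−α₁)(1−α₂)···(1−α_t)), where p is a polynomial with integer coefficients and each αᵢ is a monomial in x₁,...,xₙ. -/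
noncomputable section
open Classical

namespace StanleyAux

open MvPowerSeries Finsupp

/-- indicator power series of a set of exponents -/
def ind {σ : Type*} (A : Set (σ →₀ ℕ)) : MvPowerSeries σ ℤ :=
  fun d => if d ∈ A then 1 else 0

lemma coeff_ind {σ : Type*} (A : Set (σ →₀ ℕ)) (d : σ →₀ ℕ) :
    MvPowerSeries.coeff (R := ℤ) d (ind A) = if d ∈ A then 1 else 0 := rfl

variable {κ : Type*} [Fintype κ]

/-- total degree of an exponent vector -/
def deg (d : κ →₀ ℕ) : ℕ := ∑ i, d i

lemma apply_le_deg (d : κ →₀ ℕ) (j : κ) : d j ≤ deg d :=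
  Finset.single_le_sum (f := fun i => d i) (fun _ _ => Nat.zero_le _) (Finset.mem_univ j)

lemma deg_mono {a b : κ →₀ ℕ} (h : a ≤ b) : deg a ≤ deg b :=
  Finset.sum_le_sum fun i _ => h i

lemma deg_add (a b : κ →₀ ℕ) : deg (a + b) = deg a + deg b := by
  simp [deg, Finset.sum_add_distrib]

lemma deg_lt {a b : κ →₀ ℕ} (h : a ≤ b) (hne : a ≠ b) : deg a < deg b := by
  obtain ⟨i, hi⟩ : ∃ i, a i ≠ b i := by
    by_contra hc; push_neg at hc; exact hne (Finsupp.ext hc)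
  exact Finset.sum_lt_sum (fun i _ => h i) ⟨i, Finset.mem_univ i, lt_of_le_of_ne (h i) hi⟩

lemma deg_pos {a : κ →₀ ℕ} (h : a ≠ 0) : 0 < deg a := by
  have := deg_lt (a := 0) (b := a) zero_le (Ne.symm h)
  simpa [deg] using this

/-- Dickson-type covering lemma: every set of exponent vectors is covered from
below by finitely many of its elements. -/
lemma exists_cover (X : Set (κ →₀ ℕ)) :
    ∃ G : Finset (κ →₀ ℕ), ↑G ⊆ X ∧ ∀ x ∈ X, ∃ g ∈ G, g ≤ x := by
  set M : Set (κ →₀ ℕ) := {x | x ∈ X ∧ ∀ y ∈ X, y ≤ x → y = x} with hM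
  have hanti : IsAntichain (· ≤ ·) M := by
    rintro x ⟨hxX, _⟩ y ⟨hyX, hymin⟩ hne hle
    exact hne (hymin x hxX hle)
  have hfin : M.Finite := hanti.finite_of_partiallyWellOrderedOn (Set.isPWO_of_wellQuasiOrderedLE M)
  refine ⟨hfin.toFinset, ?_, ?_⟩
  · intro x hx
    rw [Finset.mem_coe, Set.Finite.mem_toFinset] at hx
    exact hx.1
  · have key : ∀ N, ∀ x ∈ X, deg x ≤ N → ∃ m ∈ M, m ≤ x := by
      intro N
      induction N with
      | zero =>
        intro x hx hdx
        refine ⟨x, ⟨hx, fun y hy hyx => ?_⟩, le_rfl⟩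
        by_contra hne
        exact absurd (lt_of_lt_of_le (deg_lt hyx hne) hdx) (Nat.not_lt_zero _)
      | succ N ih =>
        intro x hx hdx
        by_cases hxm : ∀ y ∈ X, y ≤ x → y = x
        · exact ⟨x, ⟨hx, hxm⟩, le_rfl⟩
        · push_neg at hxm
          obtain ⟨y, hyX, hyx, hne⟩ := hxm
          obtain ⟨m, hm, hmy⟩ := ih y hyX (by
            have := deg_lt hyx hne
            omega)
          exact ⟨m, hm, hmy.trans hyx⟩
    intro x hx
    obtain ⟨m, hm, hmx⟩ := key (deg x) x hx le_rfl
    exact ⟨m, hfin.mem_toFinset.mpr hm, hmx⟩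


section Gordan

variable (r n : ℕ) (c : Fin r → Fin n → ℤ)

/-- solution set of the system -/
def SOL : Set (Fin n →₀ ℕ) := {d | ∀ i, 0 ≤ ∑ j, c i j * (d j : ℤ)}

lemma sol_add {d e : Fin n →₀ ℕ} (hd : d ∈ SOL r n c) (he : e ∈ SOL r n c) :
    d + e ∈ SOL r n c := by
  intro i
  have : (∑ j, c i j * ((d + e) j : ℤ)) =
      (∑ j, c i j * (d j : ℤ)) + ∑ j, c i j * (e j : ℤ) := by
    rw [← Finset.sum_add_distrib]
    refine Finset.sum_congr rfl fun j _ => ?_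
    rw [Finsupp.add_apply]
    push_cast
    ring
  rw [this]
  exact add_nonneg (hd i) (he i)

lemma sol_zero : (0 : Fin n →₀ ℕ) ∈ SOL r n c := by
  intro i; simp [SOL]

lemma sol_sub {d g : Fin n →₀ ℕ} (hd : d ∈ SOL r n c) (hle : g ≤ d)
    (hval : ∀ i, ∑ j, c i j * (g j : ℤ) ≤ ∑ j, c i j * (d j : ℤ)) :
    d - g ∈ SOL r n c := by
  intro i
  have : (∑ j, c i j * (((d - g) j : ℕ) : ℤ)) =
      (∑ j, c i j * (d j : ℤ)) - ∑ j, c i j * (g j : ℤ) := by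
    rw [← Finset.sum_sub_distrib]
    refine Finset.sum_congr rfl fun j _ => ?_
    rw [Finsupp.tsub_apply, Nat.cast_sub (hle j)]
    ring
  rw [this]
  exact sub_nonneg.mpr (hval i)

/-- Gordan's lemma: the solution monoid is finitely generated. -/
lemma gordan : ∃ (t : ℕ) (g : Fin t → (Fin n →₀ ℕ)), (∀ i, g i ≠ 0) ∧
    (∀ i, g i ∈ SOL r n c) ∧
    (∀ d, d ∈ SOL r n c ↔ ∃ a : Fin t →₀ ℕ, ∑ i, a i • g i = d) := by
  classical
  -- embed solutions into a bigger exponent space recording the values of the forms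
  set ψ : (Fin n →₀ ℕ) → ((Fin n ⊕ Fin r) →₀ ℕ) := fun d =>
    Finsupp.equivFunOnFinite.symm
      (Sum.elim (⇑d) (fun i => (∑ j, c i j * (d j : ℤ)).toNat)) with hψ
  have hψapp_inl : ∀ d j, ψ d (Sum.inl j) = d j := by
    intro d j; simp [hψ]
  have hψapp_inr : ∀ d i, ψ d (Sum.inr i) = (∑ j, c i j * (d j : ℤ)).toNat := by
    intro d i; simp [hψ]
  obtain ⟨G', hG'sub, hG'cov⟩ := exists_cover (ψ '' (SOL r n c \ {0}))
  -- pick preimages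
  set ρ : ((Fin n ⊕ Fin r) →₀ ℕ) → (Fin n →₀ ℕ) := fun u =>
    Finsupp.equivFunOnFinite.symm (fun j => u (Sum.inl j)) with hρ
  have hρψ : ∀ d, ρ (ψ d) = d := by
    intro d; ext j; simp [hρ, hψapp_inl]
  set G : Finset (Fin n →₀ ℕ) := G'.image ρ with hG
  have hGmem : ∀ g ∈ G, g ∈ SOL r n c ∧ g ≠ 0 := by
    intro g hg
    rw [hG, Finset.mem_image] at hg
    obtain ⟨u, hu, rfl⟩ := hg
    obtain ⟨d, hd, rfl⟩ := hG'sub hu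
    rw [hρψ]
    exact ⟨hd.1, by simpa using hd.2⟩
  have hGcov : ∀ d, d ∈ SOL r n c → d ≠ 0 →
      ∃ g ∈ G, g ≠ 0 ∧ g ≤ d ∧ d - g ∈ SOL r n c := by
    intro d hd hd0
    obtain ⟨u, hu, hule⟩ := hG'cov (ψ d) ⟨d, ⟨hd, by simpa using hd0⟩, rfl⟩
    obtain ⟨e, he, rfl⟩ := hG'sub hu
    have heG : e ∈ G := by
      have : ρ (ψ e) ∈ G := Finset.mem_image_of_mem ρ hu
      rwa [hρψ] at this
    have hled : e ≤ d := by
      intro j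
      have := hule (Sum.inl j)
      rwa [hψapp_inl, hψapp_inl] at this
    have hval : ∀ i, ∑ j, c i j * (e j : ℤ) ≤ ∑ j, c i j * (d j : ℤ) := by
      intro i
      have h2 := hule (Sum.inr i)
      rw [hψapp_inr, hψapp_inr] at h2
      have he' := he.1 i
      have hd' := hd i
      omega
    exact ⟨e, heG, by simpa using he.2, hled, sol_sub r n c hd hled hval⟩
  -- enumerate G
  refine ⟨G.card, fun i => (G.equivFin.symm i : _), ?_, ?_, ?_⟩
  · intro i; exact (hGmem _ (G.equivFin.symm i).2).2
  · intro i; exact (hGmem _ (G.equivFin.symm i).2).1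
  · intro d
    constructor
    · -- generation, by strong induction on degree
      intro hd
      have key : ∀ N, ∀ e, e ∈ SOL r n c → deg e ≤ N →
          ∃ a : Fin G.card →₀ ℕ, ∑ i, a i • ((G.equivFin.symm i : _) : Fin n →₀ ℕ) = e := by
        intro N
        induction N with
        | zero =>
          intro e _ hdeg
          have : e = 0 := by
            by_contra h
            exact absurd (lt_of_lt_of_le (deg_pos h) hdeg) (by omega)
          exact ⟨0, by simp [this]⟩
        | succ N ih =>
          intro e he hdeg
          by_cases h0 : e = 0
          · exact ⟨0, by simp [h0]⟩
          · obtain ⟨g, hgG, hg0, hgle, hsub⟩ := hGcov e he h0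
            have hdegsub : deg (e - g) ≤ N := by
              have h1 : deg (e - g) + deg g = deg e := by
                rw [← deg_add, tsub_add_cancel_of_le hgle]
              have h2 := deg_pos hg0
              omega
            obtain ⟨a, ha⟩ := ih (e - g) hsub hdegsub
            set k : Fin G.card := G.equivFin ⟨g, hgG⟩ with hk
            refine ⟨a + Finsupp.single k 1, ?_⟩
            have hgk : ((G.equivFin.symm k : _) : Fin n →₀ ℕ) = g := by
              rw [hk, Equiv.symm_apply_apply]
            rw [Finset.sum_congr rfl (fun i _ => by
              rw [Finsupp.add_apply, add_smul])]
            rw [Finset.sum_add_distrib, ha]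
            have : ∑ i, (Finsupp.single k 1 : Fin G.card →₀ ℕ) i •
                ((G.equivFin.symm i : _) : Fin n →₀ ℕ) = g := by
              rw [Finset.sum_eq_single k]
              · simp [hgk]
              · intro b _ hb; simp [Finsupp.single_apply, Ne.symm hb]
              · intro h; exact absurd (Finset.mem_univ k) h
            rw [this, tsub_add_cancel_of_le hgle]
      exact key (deg d) d hd le_rfl
    · rintro ⟨a, rfl⟩
      -- sums of solutions are solutions
      classical
      have hterm : ∀ x : Fin G.card, ∀ m : ℕ,
          m • ((G.equivFin.symm x : _) : Fin n →₀ ℕ) ∈ SOL r n c := by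
        intro x m
        induction m with
        | zero => simpa using sol_zero r n c
        | succ m ihm =>
          rw [succ_nsmul]
          exact sol_add r n c ihm ((hGmem _ (G.equivFin.symm x).2).1)
      have hsum : ∀ s : Finset (Fin G.card),
          (∑ i ∈ s, a i • ((G.equivFin.symm i : _) : Fin n →₀ ℕ)) ∈ SOL r n c := by
        intro s
        induction s using Finset.induction_on with
        | empty => simpa using sol_zero r n c
        | insert _ _ hx ih =>
          rw [Finset.sum_insert hx]
          exact sol_add r n c (hterm _ _) ih
      exact hsum Finset.univ

end Gordan


section Hilbert

variable {κ : Type*} [Fintype κ]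

lemma coeff_mul_one_sub_monomial (F : MvPowerSeries κ ℤ) (v d : κ →₀ ℕ) :
    MvPowerSeries.coeff (R := ℤ) d (F * (1 - MvPowerSeries.monomial (R := ℤ) v 1)) =
      MvPowerSeries.coeff (R := ℤ) d F -
        (if v ≤ d then MvPowerSeries.coeff (R := ℤ) (d - v) F else 0) := by
  rw [mul_sub, mul_one, map_sub, MvPowerSeries.coeff_mul_monomial]
  by_cases h : v ≤ d <;> simp [h]

/-- geometric series identity -/
lemma ind_univ_mul_prod :
    ind (Set.univ : Set (κ →₀ ℕ)) *
      ∏ i : κ, (1 - MvPowerSeries.monomial (R := ℤ) (Finsupp.single i 1) 1) = 1 := by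
  have key : ∀ s : Finset κ,
      ind (Set.univ : Set (κ →₀ ℕ)) *
        ∏ i ∈ s, (1 - MvPowerSeries.monomial (R := ℤ) (Finsupp.single i 1) 1) =
        ind {d : κ →₀ ℕ | ∀ i ∈ s, d i = 0} := by
    intro s
    induction s using Finset.induction_on with
    | empty => simp [ind]
    | insert _ _ hx ih =>
      rename_i x s'
      rw [Finset.prod_insert hx, mul_comm (1 - MvPowerSeries.monomial (R := ℤ) (Finsupp.single x 1) 1),
        ← mul_assoc, ih]
      ext d
      rw [coeff_mul_one_sub_monomial]
      simp only [coeff_ind, Set.mem_setOf_eq]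
      by_cases hdx : d x = 0
      · have hnle : ¬ Finsupp.single x 1 ≤ d := by
          rw [Finsupp.single_le_iff]; omega
        rw [if_neg hnle, sub_zero]
        have : (∀ i ∈ s', d i = 0) ↔ (∀ i ∈ insert x s', d i = 0) := by
          constructor
          · intro h i hi
            rcases Finset.mem_insert.mp hi with h1 | h1
            · rw [h1]; exact hdx
            · exact h i h1
          · intro h i hi; exact h i (Finset.mem_insert_of_mem hi)
        by_cases h : ∀ i ∈ s', d i = 0
        · rw [if_pos h, if_pos (this.mp h)]
        · rw [if_neg h, if_neg (fun h' => h (this.mpr h'))]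
      · have hle : Finsupp.single x 1 ≤ d := by
          rw [Finsupp.single_le_iff]; omega
        rw [if_pos hle]
        have heq : (∀ i ∈ s', (d - Finsupp.single x 1 : κ →₀ ℕ) i = 0) ↔ (∀ i ∈ s', d i = 0) := by
          refine forall₂_congr (fun i hi => ?_)
          have hne : i ≠ x := fun h => hx (h ▸ hi)
          rw [Finsupp.tsub_apply, Finsupp.single_apply, if_neg (Ne.symm hne)]
          omega
        have hnot : ¬ (∀ i ∈ insert x s', d i = 0) := by
          intro h; exact hdx (h x (Finset.mem_insert_self x s'))
        rw [if_neg hnot]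
        by_cases h : ∀ i ∈ s', d i = 0
        · rw [if_pos h, if_pos (heq.mpr h), sub_self]
        · rw [if_neg h, if_neg (fun h' => h (heq.mp h')), sub_self]
  rw [key Finset.univ]
  ext d
  rw [MvPowerSeries.coeff_one]
  simp only [coeff_ind, Set.mem_setOf_eq]
  have : (∀ i ∈ Finset.univ, d i = 0) ↔ d = 0 := by
    constructor
    · intro h; ext i; exact h i (Finset.mem_univ i)
    · intro h i _; rw [h]; rfl
  by_cases h : d = 0
  · rw [if_pos (by simpa using this.mpr h), if_pos h]
  · rw [if_neg (fun h' => h (this.mp (by simpa using h'))), if_neg h]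

/-- splitting off one generator of the "monomial ideal" -/
lemma ind_avoid_cons (v : κ →₀ ℕ) (G : List (κ →₀ ℕ)) :
    ind {a : κ →₀ ℕ | ∀ u ∈ (v :: G), ¬ u ≤ a} =
      ind {a : κ →₀ ℕ | ∀ u ∈ G, ¬ u ≤ a} -
        MvPowerSeries.monomial (R := ℤ) v 1 *
          ind {a : κ →₀ ℕ | ∀ u ∈ G.map (· - v), ¬ u ≤ a} := by
  ext d
  rw [map_sub, MvPowerSeries.coeff_monomial_mul]
  simp only [coeff_ind, Set.mem_setOf_eq]
  by_cases hvd : v ≤ d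
  · rw [if_pos hvd, one_mul]
    have hnot : ¬ (∀ u ∈ (v :: G), ¬ u ≤ d) := by
      intro h; exact h v List.mem_cons_self hvd
    rw [if_neg hnot]
    have heq : (∀ u ∈ G.map (· - v), ¬ u ≤ d - v) ↔ (∀ u ∈ G, ¬ u ≤ d) := by
      constructor
      · intro h u hu hle
        refine h (u - v) (List.mem_map.mpr ⟨u, hu, rfl⟩) ?_
        intro i
        rw [Finsupp.tsub_apply, Finsupp.tsub_apply]
        have := hle i
        omega
      · intro h u hu hle
        obtain ⟨w, hw, rfl⟩ := List.mem_map.mp hu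
        refine h w hw ?_
        intro i
        have h1 := hle i
        have h2 := hvd i
        rw [Finsupp.tsub_apply] at h1
        rw [Finsupp.tsub_apply] at h1
        omega
    by_cases h : ∀ u ∈ G, ¬ u ≤ d
    · rw [if_pos h, if_pos (heq.mpr h), sub_self]
    · rw [if_neg h, if_neg (fun h' => h (heq.mp h')), sub_self]
  · rw [if_neg hvd, sub_zero]
    have heq : (∀ u ∈ (v :: G), ¬ u ≤ d) ↔ (∀ u ∈ G, ¬ u ≤ d) := by
      constructor
      · intro h u hu; exact h u (List.mem_cons_of_mem v hu)
      · intro h u hu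
        rcases List.mem_cons.mp hu with h1 | h1
        · rw [h1]; exact hvd
        · exact h u h1
    by_cases h : ∀ u ∈ G, ¬ u ≤ d
    · rw [if_pos (heq.mpr h), if_pos h]
    · rw [if_neg (fun h' => h (heq.mp h')), if_neg h]

lemma sum_deg_map_tsub (v : κ →₀ ℕ) : ∀ G : List (κ →₀ ℕ),
    ((G.map (· - v)).map deg).sum ≤ (G.map deg).sum := by
  intro G
  induction G with
  | nil => simp
  | cons w G ihG =>
    simp only [List.map_cons, List.sum_cons]
    have : deg (w - v) ≤ deg w := deg_mono (by intro i; rw [Finsupp.tsub_apply]; omega)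
    omega

/-- Hilbert series of a "monomial ideal complement" has denominator `∏ (1 - xᵢ)`. -/
lemma hilbert_aux : ∀ (N : ℕ) (G : List (κ →₀ ℕ)),
    G.length + (G.map deg).sum ≤ N →
    ∃ q : MvPolynomial κ ℤ,
      ind {a : κ →₀ ℕ | ∀ u ∈ G, ¬ u ≤ a} *
        ∏ i : κ, (1 - MvPowerSeries.monomial (R := ℤ) (Finsupp.single i 1) 1) =
        (q : MvPowerSeries κ ℤ) := by
  intro N
  induction N with
  | zero =>
    rintro (_ | ⟨v, G⟩) hlen
    · refine ⟨1, ?_⟩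
      rw [MvPolynomial.coe_one]
      simpa using ind_univ_mul_prod
    · simp at hlen
  | succ N ih =>
    rintro (_ | ⟨v, G⟩) hlen
    · refine ⟨1, ?_⟩
      rw [MvPolynomial.coe_one]
      simpa using ind_univ_mul_prod
    · have hlen' : G.length + (G.map deg).sum ≤ N := by
        simp at hlen; omega
      have hlen'' : (G.map (· - v)).length + ((G.map (· - v)).map deg).sum ≤ N := by
        have h1 := sum_deg_map_tsub v G
        simp only [List.length_map]
        simp at hlen
        omega
      obtain ⟨q₁, hq₁⟩ := ih G hlen'
      obtain ⟨q₂, hq₂⟩ := ih (G.map (· - v)) hlen''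
      refine ⟨q₁ - MvPolynomial.monomial v 1 * q₂, ?_⟩
      have hcoe : ((q₁ - MvPolynomial.monomial v 1 * q₂ : MvPolynomial κ ℤ) :
          MvPowerSeries κ ℤ) =
          (q₁ : MvPowerSeries κ ℤ) -
            MvPowerSeries.monomial (R := ℤ) v 1 * (q₂ : MvPowerSeries κ ℤ) := by
        rw [← MvPolynomial.coeToMvPowerSeries.ringHom_apply, map_sub, map_mul,
          MvPolynomial.coeToMvPowerSeries.ringHom_apply,
          MvPolynomial.coeToMvPowerSeries.ringHom_apply,
          MvPolynomial.coeToMvPowerSeries.ringHom_apply, MvPolynomial.coe_monomial]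
      rw [hcoe, ind_avoid_cons, sub_mul, hq₁, mul_assoc, hq₂]

end Hilbert


section Transport

variable {t m : ℕ} (g : Fin t → (Fin m →₀ ℕ))

/-- the additive map sending a multi-exponent to the corresponding combination
of generators -/
def Phi (a : Fin t →₀ ℕ) : Fin m →₀ ℕ := ∑ i, a i • g i

lemma Phi_add (a b : Fin t →₀ ℕ) : Phi g (a + b) = Phi g a + Phi g b := by
  rw [Phi, Phi, Phi, ← Finset.sum_add_distrib]
  refine Finset.sum_congr rfl fun i _ => ?_
  rw [Finsupp.add_apply, add_smul]

lemma Phi_single (i : Fin t) : Phi g (Finsupp.single i 1) = g i := by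
  rw [Phi, Finset.sum_eq_single i]
  · simp
  · intro b _ hb; simp [Finsupp.single_apply, Ne.symm hb]
  · intro h; exact absurd (Finset.mem_univ i) h

lemma apply_le_deg_Phi (hg0 : ∀ i, g i ≠ 0) (a : Fin t →₀ ℕ) (i : Fin t) :
    a i ≤ deg (Phi g a) := by
  obtain ⟨j, hj⟩ := Finsupp.support_nonempty_iff.mpr (hg0 i)
  have hji : 1 ≤ g i j := by
    have := Finsupp.mem_support_iff.mp hj
    omega
  have h1 : a i ≤ a i * g i j := Nat.le_mul_of_pos_right _ (by omega)
  have h2 : a i * g i j ≤ (Phi g a) j := by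
    rw [Phi, Finsupp.finset_sum_apply]
    refine Finset.single_le_sum (f := fun k => (a k • g k) j) ?_ (Finset.mem_univ i)
      |>.trans_eq' ?_
    · intro k _; exact Nat.zero_le _
    · rw [Finsupp.smul_apply, smul_eq_mul]
  exact le_trans (le_trans h1 h2) (apply_le_deg _ j)

/-- box bound for fibers -/
def Bd (d : Fin m →₀ ℕ) : Fin t →₀ ℕ :=
  Finsupp.equivFunOnFinite.symm (fun _ : Fin t => deg d)

/-- the (finite) fiber of `Phi` over `d` -/
def fiberF (d : Fin m →₀ ℕ) : Finset (Fin t →₀ ℕ) :=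
  (Finset.Iic (Bd d)).filter (fun a => Phi g a = d)

lemma mem_fiberF (hg0 : ∀ i, g i ≠ 0) (a : Fin t →₀ ℕ) (d : Fin m →₀ ℕ) :
    a ∈ fiberF g d ↔ Phi g a = d := by
  rw [fiberF, Finset.mem_filter, Finset.mem_Iic]
  constructor
  · exact fun h => h.2
  · intro h
    refine ⟨?_, h⟩
    intro i
    have := apply_le_deg_Phi g hg0 a i
    rw [h] at this
    simpa [Bd] using this

/-- transport of a power series along the generators -/
def T (F : MvPowerSeries (Fin t) ℤ) : MvPowerSeries (Fin m) ℤ :=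
  fun d => ∑ a ∈ fiberF g d, MvPowerSeries.coeff (R := ℤ) a F

lemma coeff_T (F : MvPowerSeries (Fin t) ℤ) (d : Fin m →₀ ℕ) :
    MvPowerSeries.coeff (R := ℤ) d (T g F) = ∑ a ∈ fiberF g d, MvPowerSeries.coeff (R := ℤ) a F := rfl

lemma T_sub (F F' : MvPowerSeries (Fin t) ℤ) : T g (F - F') = T g F - T g F' := by
  ext d
  rw [map_sub, coeff_T, coeff_T, coeff_T, ← Finset.sum_sub_distrib]
  exact Finset.sum_congr rfl fun a _ => by rw [map_sub]

lemma T_mul_monomial (hg0 : ∀ i, g i ≠ 0) (F : MvPowerSeries (Fin t) ℤ) (i : Fin t) :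
    T g (F * MvPowerSeries.monomial (R := ℤ) (Finsupp.single i 1) 1) =
      T g F * MvPowerSeries.monomial (R := ℤ) (g i) 1 := by
  ext d
  rw [coeff_T, MvPowerSeries.coeff_mul_monomial]
  have hstep : ∀ a ∈ fiberF g d,
      MvPowerSeries.coeff (R := ℤ) a (F * MvPowerSeries.monomial (R := ℤ) (Finsupp.single i 1) 1) =
        if Finsupp.single i 1 ≤ a then
          MvPowerSeries.coeff (R := ℤ) (a - Finsupp.single i 1) F else 0 := by
    intro a _
    rw [MvPowerSeries.coeff_mul_monomial]
    by_cases h : Finsupp.single i 1 ≤ a <;> simp [h]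
  rw [Finset.sum_congr rfl hstep, ← Finset.sum_filter]
  by_cases hgd : g i ≤ d
  · rw [if_pos hgd, mul_one, coeff_T]
    refine Finset.sum_nbij' (fun a => a - Finsupp.single i 1)
      (fun b => b + Finsupp.single i 1) ?_ ?_ ?_ ?_ ?_
    · intro a ha
      rw [Finset.mem_filter] at ha
      obtain ⟨hafib, hle⟩ := ha
      rw [mem_fiberF g hg0] at hafib ⊢
      have h1 : Phi g (a - Finsupp.single i 1) + g i = d := by
        rw [← Phi_single g i, ← Phi_add, tsub_add_cancel_of_le hle, hafib]
      exact eq_tsub_of_add_eq h1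
    · intro b hb
      rw [mem_fiberF g hg0] at hb
      rw [Finset.mem_filter, mem_fiberF g hg0]
      refine ⟨?_, le_add_self⟩
      rw [Phi_add, hb, Phi_single, tsub_add_cancel_of_le hgd]
    · intro a ha
      rw [Finset.mem_filter] at ha
      exact tsub_add_cancel_of_le ha.2
    · intro b _
      exact add_tsub_cancel_right _ _
    · intro a _; rfl
  · rw [if_neg hgd]
    refine Finset.sum_eq_zero fun a ha => ?_
    exfalso
    rw [Finset.mem_filter, mem_fiberF g hg0] at ha
    obtain ⟨hafib, hle⟩ := ha
    refine hgd ?_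
    have h1 : Phi g (a - Finsupp.single i 1) + g i = d := by
      rw [← Phi_single g i, ← Phi_add, tsub_add_cancel_of_le hle, hafib]
    rw [← h1]
    exact le_add_self

lemma T_mul_one_sub (hg0 : ∀ i, g i ≠ 0) (F : MvPowerSeries (Fin t) ℤ) (i : Fin t) :
    T g (F * (1 - MvPowerSeries.monomial (R := ℤ) (Finsupp.single i 1) 1)) =
      T g F * (1 - MvPowerSeries.monomial (R := ℤ) (g i) 1) := by
  rw [mul_one_sub, mul_one_sub, T_sub, T_mul_monomial g hg0]

lemma T_mul_prod (hg0 : ∀ i, g i ≠ 0) (F : MvPowerSeries (Fin t) ℤ) :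
    T g (F * ∏ i : Fin t, (1 - MvPowerSeries.monomial (R := ℤ) (Finsupp.single i 1) 1)) =
      T g F * ∏ i : Fin t, (1 - MvPowerSeries.monomial (R := ℤ) (g i) 1) := by
  have key : ∀ s : Finset (Fin t), ∀ F,
      T g (F * ∏ i ∈ s, (1 - MvPowerSeries.monomial (R := ℤ) (Finsupp.single i 1) 1)) =
        T g F * ∏ i ∈ s, (1 - MvPowerSeries.monomial (R := ℤ) (g i) 1) := by
    intro s
    induction s using Finset.induction_on with
    | empty => intro F; simp
    | insert _ _ hx ih =>
      rename_i x s'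
      intro F
      have hre : F * ∏ i ∈ insert x s', (1 - MvPowerSeries.monomial (R := ℤ) (Finsupp.single i 1) 1) =
          (F * (1 - MvPowerSeries.monomial (R := ℤ) (Finsupp.single x 1) 1)) *
            ∏ i ∈ s', (1 - MvPowerSeries.monomial (R := ℤ) (Finsupp.single i 1) 1) := by
        rw [Finset.prod_insert hx]; ring
      rw [hre, ih _, T_mul_one_sub g hg0, Finset.prod_insert hx]
      ring
  exact key Finset.univ F

lemma T_coe (hg0 : ∀ i, g i ≠ 0) (q : MvPolynomial (Fin t) ℤ) :
    T g (q : MvPowerSeries (Fin t) ℤ) =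
      ((∑ a ∈ q.support, MvPolynomial.monomial (Phi g a) (q.coeff a) :
        MvPolynomial (Fin m) ℤ) : MvPowerSeries (Fin m) ℤ) := by
  ext d
  rw [coeff_T, MvPolynomial.coeff_coe, MvPolynomial.coeff_sum]
  have h1 : ∀ a ∈ q.support,
      (MvPolynomial.monomial (Phi g a) (q.coeff a)).coeff d =
        if Phi g a = d then q.coeff a else 0 := by
    intro a _; rw [MvPolynomial.coeff_monomial]
  rw [Finset.sum_congr rfl h1, ← Finset.sum_filter]
  have h2 : ∀ a ∈ fiberF g d, MvPowerSeries.coeff (R := ℤ) a (q : MvPowerSeries (Fin t) ℤ) =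
      q.coeff a := fun a _ => MvPolynomial.coeff_coe _ _
  rw [Finset.sum_congr rfl h2]
  rw [← Finset.sum_filter_of_ne (s := fiberF g d) (f := fun a => q.coeff a)
    (p := fun a => a ∈ q.support) (fun a _ ha => MvPolynomial.mem_support_iff.mpr ha)]
  refine Finset.sum_congr ?_ (fun _ _ => rfl)
  ext a
  rw [Finset.mem_filter, Finset.mem_filter, mem_fiberF g hg0]
  tauto

/-- the set of lexicographically minimal representatives -/
def Lset : Set (Fin t →₀ ℕ) :=
  {a | ∀ b, Phi g b = Phi g a → toLex a ≤ toLex b}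

lemma toLex_add' (a b : Fin t →₀ ℕ) :
    (toLex (a + b) : Lex (Fin t →₀ ℕ)) = toLex a + toLex b := rfl

lemma Lset_dc {a b : Fin t →₀ ℕ} (ha : a ∈ Lset g) (hba : b ≤ a) : b ∈ Lset g := by
  intro b' hb'
  have hc : b + (a - b) = a := add_tsub_cancel_of_le hba
  have hΦ : Phi g (b' + (a - b)) = Phi g a := by
    rw [Phi_add, hb', ← Phi_add, hc]
  have h1 : toLex a ≤ toLex (b' + (a - b)) := ha _ hΦ
  have h2 : toLex b + toLex (a - b) ≤ toLex b' + toLex (a - b) := by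
    rw [← toLex_add', ← toLex_add', hc]
    exact h1
  exact le_of_add_le_add_right h2

lemma T_ind_Lset (hg0 : ∀ i, g i ≠ 0) (A : Set (Fin m →₀ ℕ))
    (hA : ∀ d, d ∈ A ↔ ∃ a, Phi g a = d) :
    T g (ind (Lset g)) = ind A := by
  ext d
  rw [coeff_T]
  have h1 : ∀ a ∈ fiberF g d, MvPowerSeries.coeff (R := ℤ) a (ind (Lset g)) =
      if a ∈ Lset g then 1 else 0 := fun a _ => rfl
  rw [Finset.sum_congr rfl h1, ← Finset.sum_filter, coeff_ind]
  by_cases hd : d ∈ A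
  · obtain ⟨a, ha⟩ := (hA d).mp hd
    have hne : (fiberF g d).Nonempty := ⟨a, (mem_fiberF g hg0 a d).mpr ha⟩
    obtain ⟨a₀, ha₀mem, ha₀min⟩ :=
      Finset.exists_min_image (fiberF g d) (fun a => (toLex a : Lex (Fin t →₀ ℕ))) hne
    have hfil : (fiberF g d).filter (fun a => a ∈ Lset g) = {a₀} := by
      ext b
      rw [Finset.mem_filter, Finset.mem_singleton]
      constructor
      · rintro ⟨hbfib, hbL⟩
        have h2 : toLex b ≤ toLex a₀ := by
          refine hbL a₀ ?_
          rw [(mem_fiberF g hg0 a₀ d).mp ha₀mem, (mem_fiberF g hg0 b d).mp hbfib]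
        have h3 : toLex a₀ ≤ toLex b := ha₀min b hbfib
        exact toLex.injective (le_antisymm h2 h3)
      · intro hb
        subst hb
        refine ⟨ha₀mem, ?_⟩
        intro b' hb'
        refine ha₀min b' ?_
        rw [mem_fiberF g hg0, hb']
        exact (mem_fiberF g hg0 _ d).mp ha₀mem
      
    rw [hfil, if_pos hd, Finset.sum_singleton]
  · rw [if_neg hd]
    refine Finset.sum_eq_zero fun b hb => ?_
    rw [Finset.mem_filter, mem_fiberF g hg0] at hb
    exact absurd ((hA d).mpr ⟨b, hb.1⟩) hd

end Transport

end StanleyAux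

/-- The full generating function of the set of nonnegative integer solutions
of the homogeneous system of linear inequalities `∑_j c i j · λ_j ≥ 0`
(`i = 1,…,r`) given by the rows of an integer matrix `c`. -/
def solGF (r n : ℕ) (c : Fin r → Fin n → ℤ) : MvPowerSeries (Fin n) ℤ :=
  fun d => if ∀ i, 0 ≤ ∑ j, c i j * (d j : ℤ) then 1 else 0

/-- For any finite homogeneous system of linear inequalities with integer
coefficients, the full generating function of its set of nonnegative integer
solutions is a rational function `p(x₁,…,xₙ)/((1−α₁)⋯(1−α_t))` with `p` an
integer polynomial and each `αᵢ` a (nontrivial) monomial in `x₁,…,xₙ`. -/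
theorem generating_function_is_rational (r n : ℕ) (c : Fin r → Fin n → ℤ) :
    ∃ (t : ℕ) (α : Fin t → (Fin n →₀ ℕ)) (p : MvPolynomial (Fin n) ℤ),
      (∀ i, α i ≠ 0) ∧
      solGF r n c * ∏ i, (1 - MvPowerSeries.monomial (R := ℤ) (α i) 1) =
        (p : MvPowerSeries (Fin n) ℤ) := by
  classical
  obtain ⟨t, g, hg0, hgS, hgen⟩ := StanleyAux.gordan r n c
  have hsol : solGF r n c = StanleyAux.ind (StanleyAux.SOL r n c) := by
    ext d
    rw [StanleyAux.coeff_ind, MvPowerSeries.coeff_apply]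
    simp only [solGF, StanleyAux.SOL, Set.mem_setOf_eq]
  obtain ⟨G₀, hG₀sub, hG₀cov⟩ := StanleyAux.exists_cover ((StanleyAux.Lset g)ᶜ)
  have hLset : StanleyAux.Lset g = {a | ∀ u ∈ G₀.toList, ¬ u ≤ a} := by
    ext a
    simp only [Set.mem_setOf_eq, Finset.mem_toList]
    constructor
    · intro haL u huG hule
      exact (hG₀sub huG) (StanleyAux.Lset_dc g haL hule)
    · intro h
      by_contra haL
      obtain ⟨u, huG, hule⟩ := hG₀cov a haL
      exact h u huG hule
  obtain ⟨q, hq⟩ := StanleyAux.hilbert_aux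
    (G₀.toList.length + (G₀.toList.map StanleyAux.deg).sum) G₀.toList le_rfl
  refine ⟨t, g, ∑ a ∈ q.support, MvPolynomial.monomial (StanleyAux.Phi g a) (q.coeff a),
    hg0, ?_⟩
  have hTL : StanleyAux.T g (StanleyAux.ind (StanleyAux.Lset g)) =
      StanleyAux.ind (StanleyAux.SOL r n c) := by
    refine StanleyAux.T_ind_Lset g hg0 _ (fun d => ?_)
    rw [hgen d]
    exact exists_congr fun a => by rw [StanleyAux.Phi]
  calc solGF r n c * ∏ i, (1 - MvPowerSeries.monomial (R := ℤ) (g i) 1)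
      = StanleyAux.T g (StanleyAux.ind (StanleyAux.Lset g)) *
        ∏ i, (1 - MvPowerSeries.monomial (R := ℤ) (g i) 1) := by rw [hsol, hTL]
    _ = StanleyAux.T g (StanleyAux.ind (StanleyAux.Lset g) *
        ∏ i, (1 - MvPowerSeries.monomial (R := ℤ) (Finsupp.single i 1) 1)) :=
      (StanleyAux.T_mul_prod g hg0 _).symm
    _ = StanleyAux.T g (q : MvPowerSeries (Fin t) ℤ) := by rw [hLset, hq]
    _ = _ := StanleyAux.T_coe g hg0 q
end
end
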